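/- For every σ ∈ S_n, a subset of {1,…,n} is a section of σ if and only if it is a nonempty interval that is a union of segments of σ. -/
import Mathlib


/-- `I` is closed with respect to `σ`: `σ i ∈ I` for all `i ∈ I`. -/
def PermClosed {n : ℕ} (σ : Equiv.Perm (Fin n)) (I : Set (Fin n)) : Prop :=
  ∀ i ∈ I, σ i ∈ I

/-- `I` is a section of `σ`: a nonempty interval `{u,…,v}` such that `I`, `{x | x < u}`
and `{x | v < x}` are all closed with respect to `σ`. -/
def IsSection {n : ℕ} (σ : Equiv.Perm (Fin n)) (I : Set (Fin n)) : Prop :=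
  ∃ u v : Fin n, u ≤ v ∧ I = Set.Icc u v ∧
    PermClosed σ I ∧ PermClosed σ {x | x < u} ∧ PermClosed σ {x | v < x}

/-- `I` is a segment of `σ`: a section minimal with respect to inclusion. -/
def IsSegment {n : ℕ} (σ : Equiv.Perm (Fin n)) (I : Set (Fin n)) : Prop :=
  IsSection σ I ∧ ∀ J : Set (Fin n), IsSection σ J → J ⊆ I → J = I

/-- `Seg σ`, the set of all segments of `σ`. -/
def Seg {n : ℕ} (σ : Equiv.Perm (Fin n)) : Set (Set (Fin n)) :=
  {I | IsSegment σ I}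

/-- `σ` and `μ` are sectionally inverted or equal: they have the same segments and on
each segment `μ` coincides with `σ` or with `σ⁻¹`. -/
def Rho {n : ℕ} (σ μ : Equiv.Perm (Fin n)) : Prop :=
  Seg σ = Seg μ ∧ ∀ I ∈ Seg σ, (∀ i ∈ I, μ i = σ i) ∨ (∀ i ∈ I, μ i = σ⁻¹ i)

section Aux

variable {n : ℕ} (σ : Equiv.Perm (Fin n))

lemma permClosed_compl {S : Set (Fin n)} (h : PermClosed σ S) : PermClosed σ Sᶜ := by
  intro i hi
  by_contra hc
  simp only [Set.mem_compl_iff, not_not] at hc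
  -- σ maps S into S injectively, hence bijectively since S is finite
  have hmaps : Set.MapsTo σ S S := h
  have hinj : Set.InjOn σ S := σ.injective.injOn
  have hsurj : Set.SurjOn σ S S :=
    ((Set.Finite.injOn_iff_bijOn_of_mapsTo (Set.toFinite S) hmaps).mp hinj).surjOn
  obtain ⟨y, hy, hyx⟩ := hsurj hc
  have : y = i := σ.injective hyx
  exact hi (this ▸ hy)

/-- `{x | x ≤ k}` is closed. -/
def Cut (k : Fin n) : Prop := PermClosed σ {x | x ≤ k}

lemma cut_of_gt_closed {v : Fin n} (h : PermClosed σ {x | v < x}) : Cut σ v := by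
  have : {x : Fin n | x ≤ v} = {x | v < x}ᶜ := by ext x; simp [not_lt]
  rw [Cut, this]; exact permClosed_compl σ h

lemma gt_closed_of_cut {v : Fin n} (h : Cut σ v) : PermClosed σ {x | v < x} := by
  have : {x : Fin n | v < x} = {x | x ≤ v}ᶜ := by ext x; simp [not_le]
  rw [this]; exact permClosed_compl σ h

lemma permClosed_Icc {u v : Fin n} (hu : PermClosed σ {x | x < u}) (hv : Cut σ v) :
    PermClosed σ (Set.Icc u v) := by
  have : Set.Icc u v = {x : Fin n | x ≤ v} ∩ {x | x < u}ᶜ := by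
    ext x; simp [Set.mem_Icc, not_lt, and_comm]
  rw [this]
  intro i hi
  exact ⟨hv i hi.1, permClosed_compl σ hu i hi.2⟩

lemma segment_of_noCut {a b : Fin n} (hab : a ≤ b) (ha : PermClosed σ {x | x < a})
    (hb : Cut σ b) (hno : ∀ w, a ≤ w → w < b → ¬ Cut σ w) : IsSegment σ (Set.Icc a b) := by
  constructor
  · exact ⟨a, b, hab, rfl, permClosed_Icc σ ha hb, ha, gt_closed_of_cut σ hb⟩
  · rintro J ⟨a', b', hab', rfl, _, ha', hb'⟩ hsub
    have hb'c : Cut σ b' := cut_of_gt_closed σ hb'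
    have haa' : a ≤ a' ∧ a' ≤ b := (hsub (Set.mem_Icc.mpr ⟨le_rfl, hab'⟩))
    have hbb' : b' ≤ b := (hsub (Set.mem_Icc.mpr ⟨hab', le_rfl⟩)).2
    have ha'a : a' = a := by
      by_contra hne
      have hlt : a < a' := lt_of_le_of_ne haa'.1 (Ne.symm hne)
      have hpos : 0 < a'.val := lt_of_le_of_lt (Nat.zero_le _) hlt
      set w : Fin n := ⟨a'.val - 1, lt_of_le_of_lt (Nat.sub_le _ _) a'.isLt⟩ with hw
      have hcw : Cut σ w := by
        have : {x : Fin n | x ≤ w} = {x | x < a'} := by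
          ext x
          simp only [Set.mem_setOf_eq, Fin.le_def, Fin.lt_def, hw]
          omega
        rw [Cut, this]; exact ha'
      exact hno w (by rw [Fin.le_def, hw]; have := hlt; rw [Fin.lt_def] at this; simp; omega)
        (by rw [Fin.lt_def, hw]; have h1 : a'.val ≤ b'.val := hab'
            have h2 : b'.val ≤ b.val := hbb'; simp; omega) hcw
    have hb'b : b' = b := by
      by_contra hne
      have hlt : b' < b := lt_of_le_of_ne hbb' hne
      exact hno b' (ha'a ▸ hab') hlt hb'c
    rw [ha'a, hb'b]

lemma exists_segment {u v x : Fin n} (hu : PermClosed σ {x | x < u}) (hv : Cut σ v)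
    (hux : u ≤ x) (hxv : x ≤ v) :
    ∃ a b, IsSegment σ (Set.Icc a b) ∧ u ≤ a ∧ a ≤ x ∧ x ≤ b ∧ b ≤ v := by
  classical
  set F : Finset (Fin n) := Finset.univ.filter (fun w => x ≤ w ∧ Cut σ w) with hF
  have hvF : v ∈ F := by simp [hF, hxv, hv]
  have hFne : F.Nonempty := ⟨v, hvF⟩
  set b : Fin n := F.min' hFne with hbdef
  have hbF : b ∈ F := F.min'_mem hFne
  have hxb : x ≤ b := by simpa [hF] using (Finset.mem_filter.mp hbF).2.1
  have hcb : Cut σ b := by simpa [hF] using (Finset.mem_filter.mp hbF).2.2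
  have hbv : b ≤ v := F.min'_le v hvF
  have hnoF : ∀ w, x ≤ w → w < b → ¬ Cut σ w := by
    intro w h1 h2 h3
    have : w ∈ F := by simp [hF, h1, h3]
    exact absurd (F.min'_le w this) (not_le.mpr h2)
  set G : Finset (Fin n) := Finset.univ.filter (fun w => u ≤ w ∧ w < x ∧ Cut σ w) with hG
  by_cases hGe : G.Nonempty
  · set m : Fin n := G.max' hGe with hmdef
    have hmG : m ∈ G := G.max'_mem hGe
    have hum : u ≤ m := (Finset.mem_filter.mp hmG).2.1
    have hmx : m < x := (Finset.mem_filter.mp hmG).2.2.1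
    have hcm : Cut σ m := (Finset.mem_filter.mp hmG).2.2.2
    have hmn : m.val + 1 < n := by
      have h1 : m.val < x.val := hmx
      have := x.isLt; omega
    set a : Fin n := ⟨m.val + 1, hmn⟩ with hadef
    have hla : PermClosed σ {y | y < a} := by
      have : {y : Fin n | y < a} = {y | y ≤ m} := by
        ext y; simp only [Set.mem_setOf_eq, Fin.lt_def, Fin.le_def, hadef]; omega
      rw [this]; exact hcm
    have hax : a ≤ x := by
      rw [Fin.le_def, hadef]; have h1 : m.val < x.val := hmx; simp; omega
    have hab : a ≤ b := le_trans hax hxb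
    have hua : u ≤ a := by
      rw [Fin.le_def, hadef]; have h1 : u.val ≤ m.val := hum; simp; omega
    refine ⟨a, b, segment_of_noCut σ hab hla hcb ?_, hua, hax, hxb, hbv⟩
    intro w hw1 hw2 hw3
    by_cases hwx : w < x
    · have hwG : w ∈ G := by simp [hG, le_trans hua hw1, hwx, hw3]
      have : w ≤ m := G.le_max' w hwG
      have h1 : a.val ≤ w.val := hw1
      have h2 : w.val ≤ m.val := this
      simp [hadef] at h1; omega
    · exact hnoF w (not_lt.mp hwx) hw2 hw3
  · refine ⟨u, b, segment_of_noCut σ (le_trans hux hxb) hu hcb ?_, le_rfl, hux, hxb, hbv⟩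
    intro w hw1 hw2 hw3
    by_cases hwx : w < x
    · exact hGe ⟨w, by simp [hG, hw1, hwx, hw3]⟩
    · exact hnoF w (not_lt.mp hwx) hw2 hw3

end Aux

/-- a subset of `{1,…,n}` is a section of `σ` iff it is a nonempty
interval that is a union of segments of `σ`. -/
theorem isSection_iff_interval_union_segments {n : ℕ} (σ : Equiv.Perm (Fin n))
    (I : Set (Fin n)) :
    IsSection σ I ↔
      (∃ u v : Fin n, u ≤ v ∧ I = Set.Icc u v) ∧
      ∃ T : Set (Set (Fin n)), T ⊆ Seg σ ∧ I = ⋃₀ T := by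
  constructor
  · rintro ⟨u, v, huv, rfl, hcI, hcu, hcv⟩
    refine ⟨⟨u, v, huv, rfl⟩, {S | IsSegment σ S ∧ S ⊆ Set.Icc u v}, fun S hS => hS.1, ?_⟩
    apply Set.Subset.antisymm
    · intro x hx
      obtain ⟨a, b, hseg, hua, hax, hxb, hbv⟩ :=
        exists_segment σ hcu (cut_of_gt_closed σ hcv) hx.1 hx.2
      exact ⟨Set.Icc a b, ⟨hseg, Set.Icc_subset_Icc hua hbv⟩, Set.mem_Icc.mpr ⟨hax, hxb⟩⟩
    · rintro x ⟨S, ⟨_, hSsub⟩, hxS⟩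
      exact hSsub hxS
  · rintro ⟨⟨u, v, huv, rfl⟩, T, hT, hIT⟩
    have hclosed : PermClosed σ (Set.Icc u v) := by
      rw [hIT]
      rintro i ⟨S, hST, hiS⟩
      obtain ⟨_, _, _, _, hcS, _, _⟩ := (hT hST).1
      exact ⟨S, hST, hcS i hiS⟩
    have hmemI : ∀ x ∈ Set.Icc u v, ∃ S ∈ T, x ∈ S := by
      intro x hx; rw [hIT] at hx; exact hx
    obtain ⟨S, hST, huS⟩ := hmemI u (Set.mem_Icc.mpr ⟨le_rfl, huv⟩)
    obtain ⟨S', hST', hvS'⟩ := hmemI v (Set.mem_Icc.mpr ⟨huv, le_rfl⟩)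
    have hSsub : S ⊆ Set.Icc u v := by rw [hIT]; exact fun y hy => ⟨S, hST, hy⟩
    have hSsub' : S' ⊆ Set.Icc u v := by rw [hIT]; exact fun y hy => ⟨S', hST', hy⟩
    obtain ⟨a, b, hab, hSeq, _, hca, _⟩ := (hT hST).1
    obtain ⟨a', b', hab', hSeq', _, _, hcb'⟩ := (hT hST').1
    have hau : a = u := by
      have h1 : a ≤ u := by rw [hSeq] at huS; exact huS.1
      have h2 : u ≤ a := (hSsub (hSeq ▸ Set.mem_Icc.mpr ⟨le_rfl, hab⟩)).1
      exact le_antisymm h1 h2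
    have hbv : b' = v := by
      have h1 : v ≤ b' := by rw [hSeq'] at hvS'; exact hvS'.2
      have h2 : b' ≤ v := (hSsub' (hSeq' ▸ Set.mem_Icc.mpr ⟨hab', le_rfl⟩)).2
      exact le_antisymm h2 h1
    exact ⟨u, v, huv, rfl, hclosed, hau ▸ hca, hbv ▸ hcb'⟩
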